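/- With notation as in the tuple recursion (D_0 = (t,m,...,m), C = (d,1,...,1,0,...,0) with r ones, and D_i defined by subtracting C, truncating negatives to 0, and sorting), for all 0 ≤ i ≤ ω'-1: i*(r^2/n - d^2) - (r - r^2/n) ≤ D_i·C - D_0·C ≤ i*(r^2/n - d^2), where D·C = t*d - (sum of entries 2 through r+1 of D), and ω' = ⌈mn/r⌉. -/

import Mathlib

/-- One step of the recursion of Lemma II.4: subtract `C = (d,1,…,1,0,…,0)`
(with `r` ones, applied to the `r` largest tail entries since the tail is kept
sorted descending), replace negative tail entries by `0`, and re-sort the tail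
in descending order.  A tuple `D = (t, m₁, …, m_n)` is represented as a pair of
its first entry and the list of its remaining `n` entries. -/
def fatStep (d : ℤ) (r : ℕ) (p : ℤ × List ℤ) : ℤ × List ℤ :=
  (p.1 - d,
    ((p.2.take r).map (fun a => max (a - 1) 0) ++ p.2.drop r).insertionSort (· ≥ ·))

/-- The sequence `D_i` starting from `D_0 = (t, m, …, m)` (with `n` copies of `m`). -/
def fatD (d : ℤ) (r n : ℕ) (t m : ℤ) : ℕ → ℤ × List ℤ
  | 0 => (t, List.replicate n m)
  | i + 1 => fatStep d r (fatD d r n t m i)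

/-- `D·C = t·d − (sum of entries 2 through r+1 of D)`. -/
def fatDot (d : ℤ) (r : ℕ) (p : ℤ × List ℤ) : ℤ :=
  p.1 * d - (p.2.take r).sum

theorem repSorted (a b : ℕ) (x y : ℤ) (h : y ≤ x) :
    (List.replicate a x ++ List.replicate b y).Pairwise (· ≥ ·) := by
  rw [List.pairwise_append]
  refine ⟨List.pairwise_replicate.mpr (Or.inr le_rfl),
    List.pairwise_replicate.mpr (Or.inr le_rfl), ?_⟩
  intro u hu v hv
  rw [List.eq_of_mem_replicate hu, List.eq_of_mem_replicate hv]
  exact h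

theorem sortEq (l tgt : List ℤ) (h : l.Perm tgt) (hs : tgt.Pairwise (· ≥ ·)) :
    l.insertionSort (· ≥ ·) = tgt :=
  List.Perm.eq_of_pairwise (fun _ _ _ _ h1 h2 => le_antisymm h2 h1)
    (List.pairwise_insertionSort _ l) hs ((List.perm_insertionSort _ l).trans h)

theorem fatD_inv (d : ℤ) (r n : ℕ) (t m : ℤ) (hr : 0 < r) (hrn : r ≤ n) (hm : 0 ≤ m) :
    ∀ i : ℕ, (i : ℤ) * r < m * n →
    ∃ (q : ℤ) (k : ℕ), 0 ≤ q ∧ k < n ∧ (n : ℤ) * q + k = m * n - i * r ∧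
      fatD d r n t m i = (t - i * d, List.replicate k (q+1) ++ List.replicate (n-k) q) := by
  intro i
  induction i with
  | zero =>
    intro _
    exact ⟨m, 0, hm, by omega, by push_cast; ring, by simp [fatD]⟩
  | succ i ih =>
    intro h
    have hn : 0 < n := lt_of_lt_of_le hr hrn
    obtain ⟨q, k, hq, hk, hsum, heq⟩ := ih (by push_cast at h ⊢; nlinarith [hr])
    set f : ℤ → ℤ := fun a => max (a - 1) 0 with hf
    have hfq1 : f (q+1) = q := by simp [hf]; omega
    set L : List ℤ := List.replicate k (q+1) ++ List.replicate (n-k) q with hL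
    have hstep : fatD d r n t m (i+1) = fatStep d r (t - i*d, L) := by
      rw [fatD, heq]
    have hfst : t - (i:ℤ)*d - d = t - ((i:ℕ)+1 : ℕ)*d := by push_cast; ring
    rcases le_or_gt r k with hkr | hkr
    · -- r ≤ k
      have htake : L.take r = List.replicate r (q+1) := by
        rw [hL, List.take_append_of_le_length (by simp; omega), List.take_replicate]
        congr 1; omega
      have hdrop : L.drop r = List.replicate (k-r) (q+1) ++ List.replicate (n-k) q := by
        rw [hL, List.drop_append_of_le_length (by simp; omega), List.drop_replicate]
      have hperm : ((L.take r).map f ++ L.drop r).Perm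
          (List.replicate (k-r) (q+1) ++ List.replicate (n-(k-r)) q) := by
        rw [htake, hdrop, List.map_replicate, hfq1]
        have h1 : n - (k-r) = (n-k) + r := by omega
        rw [h1, List.replicate_add]
        refine List.Perm.trans List.perm_append_comm ?_
        rw [List.append_assoc]
      refine ⟨q, k - r, hq, by omega, ?_, ?_⟩
      · have : ((k - r : ℕ) : ℤ) = (k:ℤ) - r := by omega
        rw [this]; push_cast; push_cast at hsum; linarith
      · rw [hstep, fatStep, ← hfst]
        exact Prod.ext rfl (sortEq _ _ hperm (repSorted _ _ _ _ (by omega)))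
    · -- k < r
      have hkZ : (k:ℤ) < r := by exact_mod_cast hkr
      have h1 : (r:ℤ) < (n:ℤ)*q + k := by
        rw [hsum]; push_cast at h ⊢; linarith
      have hq1 : 1 ≤ q := by
        by_contra hc
        push_neg at hc
        have : (n:ℤ) * q ≤ 0 :=
          mul_nonpos_of_nonneg_of_nonpos (by positivity) (by omega)
        linarith
      have hfq0 : f q = q - 1 := by simp [hf]; omega
      have htake : L.take r = List.replicate k (q+1) ++ List.replicate (r-k) q := by
        rw [hL, List.take_append]
        simp only [List.take_replicate, List.length_replicate]
        have e1 : r ⊓ k = k := by omega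
        have e2 : (r - k) ⊓ (n - k) = r - k := by omega
        rw [e1, e2]
      have hdrop : L.drop r = List.replicate (n-r) q := by
        rw [hL, List.drop_append]
        simp only [List.drop_replicate, List.length_replicate]
        have e1 : k - r = 0 := by omega
        have e2 : n - k - (r - k) = n - r := by omega
        rw [e1, e2]
        simp
      have hperm : ((L.take r).map f ++ L.drop r).Perm
          (List.replicate (n-(r-k)) ((q-1)+1) ++ List.replicate (n-(n-(r-k))) (q-1)) := by
        rw [htake, hdrop, List.map_append, List.map_replicate, List.map_replicate, hfq1, hfq0]
        have e1 : (q-1)+1 = q := by ring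
        have e2 : n - (n-(r-k)) = r - k := by omega
        have e3 : n - (r-k) = (n-r) + k := by omega
        rw [e1, e2, e3, List.replicate_add]
        refine List.Perm.trans List.perm_append_comm ?_
        rw [← List.append_assoc]
      refine ⟨q - 1, n - (r-k), by omega, by omega, ?_, ?_⟩
      · have : ((n - (r-k) : ℕ) : ℤ) = (n:ℤ) - r + k := by omega
        rw [this]; push_cast; push_cast at hsum; linarith
      · rw [hstep, fatStep, ← hfst]
        exact Prod.ext rfl (sortEq _ _ hperm (repSorted _ _ _ _ (by omega)))

theorem stmt_10 (n r : ℕ) (d m t : ℤ) (hr : 0 < r) (hrn : r ≤ n) (hm : 0 ≤ m)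
    (i : ℕ) (hi : (i : ℤ) ≤ ⌈((m * n : ℤ) : ℚ) / (r : ℚ)⌉ - 1) :
    (i : ℚ) * ((r : ℚ) ^ 2 / n - (d : ℚ) ^ 2) - ((r : ℚ) - (r : ℚ) ^ 2 / n) ≤
      ((fatDot d r (fatD d r n t m i) - fatDot d r (fatD d r n t m 0) : ℤ) : ℚ) ∧
    ((fatDot d r (fatD d r n t m i) - fatDot d r (fatD d r n t m 0) : ℤ) : ℚ) ≤
      (i : ℚ) * ((r : ℚ) ^ 2 / n - (d : ℚ) ^ 2) := by
  have hn : 0 < n := lt_of_lt_of_le hr hrn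
  have hnQ : (0:ℚ) < n := by exact_mod_cast hn
  have hrQ : (0:ℚ) < r := by exact_mod_cast hr
  -- translate the ceiling hypothesis
  have hiZ : (i : ℤ) * r < m * n := by
    have h1 : ((i:ℤ):ℚ) < ((m * n : ℤ) : ℚ) / (r : ℚ) := Int.lt_ceil.mp (by omega)
    have h2 : ((i:ℤ):ℚ) * r < ((m * n : ℤ) : ℚ) := (lt_div_iff₀ hrQ).mp h1
    exact_mod_cast h2
  obtain ⟨q, k, hq, hk, hsum, heq⟩ := fatD_inv d r n t m hr hrn hm i hiZ
  have hkZ : (k:ℤ) < n := by exact_mod_cast hk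
  have hrnZ : (r:ℤ) ≤ n := by exact_mod_cast hrn
  have hk0 : (0:ℤ) ≤ k := by positivity
  obtain ⟨S, hS⟩ : ∃ S : ℤ, S = (r:ℤ) * q + min (k:ℤ) r := ⟨_, rfl⟩
  -- compute fatDot at step i
  have hsumtake : (((List.replicate k (q+1) ++ List.replicate (n-k) q)).take r).sum = S := by
    rcases le_or_gt r k with hkr | hkr
    · rw [List.take_append_of_le_length (by simp; omega), List.take_replicate]
      have e1 : r ⊓ k = r := by omega
      have e2 : min (k:ℤ) r = r := by omega
      rw [e1, hS, e2, List.sum_replicate, nsmul_eq_mul]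
      ring
    · rw [List.take_append]
      simp only [List.take_replicate, List.length_replicate]
      have e1 : r ⊓ k = k := by omega
      have e2 : (r - k) ⊓ (n - k) = r - k := by omega
      have e3 : min (k:ℤ) r = k := by omega
      rw [e1, e2, List.sum_append, List.sum_replicate, List.sum_replicate,
        nsmul_eq_mul, nsmul_eq_mul, hS, e3]
      have e4 : ((r - k : ℕ) : ℤ) = (r:ℤ) - k := by omega
      rw [e4]; ring
  have hdotI : fatDot d r (fatD d r n t m i) = (t - i * d) * d - S := by
    rw [fatDot, heq, hsumtake]
  have hdot0 : fatDot d r (fatD d r n t m 0) = t * d - r * m := by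
    rw [fatDot]
    show t * d - ((List.replicate n m).take r).sum = _
    rw [List.take_replicate, List.sum_replicate, nsmul_eq_mul]
    have : r ⊓ n = r := by omega
    rw [this]
  have hdiff : fatDot d r (fatD d r n t m i) - fatDot d r (fatD d r n t m 0)
      = -(i:ℤ) * d^2 + ((r:ℤ) * m - S) := by
    rw [hdotI, hdot0]; ring
  -- key integer inequalities
  have hmin1 : (r:ℤ) * k ≤ (n:ℤ) * min (k:ℤ) r := by
    rcases le_total (k:ℤ) r with h' | h'
    · rw [min_eq_left h']; nlinarith
    · rw [min_eq_right h']; nlinarith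
  have hmin2 : (n:ℤ) * min (k:ℤ) r ≤ (r:ℤ) * k + r * n - r^2 := by
    rcases le_total (k:ℤ) r with h' | h'
    · rw [min_eq_left h']; nlinarith
    · rw [min_eq_right h']; nlinarith
  have hexp : ((r:ℤ) * m - S) * n = (i:ℤ) * r^2 + r * k - n * min (k:ℤ) r := by
    rw [hS]; linear_combination (-(r:ℤ)) * hsum
  have keyA : (i:ℤ) * r^2 - r * n + r^2 ≤ ((r:ℤ) * m - S) * n := by
    rw [hexp]; linarith
  have keyB : ((r:ℤ) * m - S) * n ≤ (i:ℤ) * r^2 := by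
    rw [hexp]; linarith
  -- pass to ℚ
  have hdiffQ : ((fatDot d r (fatD d r n t m i) - fatDot d r (fatD d r n t m 0) : ℤ) : ℚ)
      = -(i:ℚ) * d^2 + ((r:ℚ) * m - (S:ℚ)) := by
    rw [hdiff]; push_cast; ring
  have keyAQ : (i:ℚ) * r^2 - r * n + r^2 ≤ ((r:ℚ) * m - (S:ℚ)) * n := by exact_mod_cast keyA
  have keyBQ : ((r:ℚ) * m - (S:ℚ)) * n ≤ (i:ℚ) * r^2 := by exact_mod_cast keyB
  have hA : ((i:ℚ) * r^2 - r * n + r^2) / n ≤ (r:ℚ) * m - (S:ℚ) := by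
    rw [div_le_iff₀ hnQ]; exact keyAQ
  have hB : (r:ℚ) * m - (S:ℚ) ≤ ((i:ℚ) * r^2) / n := by
    rw [le_div_iff₀ hnQ]; exact keyBQ
  constructor
  · rw [hdiffQ]
    have e : (i:ℚ) * ((r:ℚ)^2 / n - (d:ℚ)^2) - ((r:ℚ) - (r:ℚ)^2 / n)
        = ((i:ℚ) * r^2 - r * n + r^2) / n - (i:ℚ) * d^2 := by
      field_simp; ring
    rw [e]; linarith
  · rw [hdiffQ]
    have e : (i:ℚ) * ((r:ℚ)^2 / n - (d:ℚ)^2) = ((i:ℚ) * r^2) / n - (i:ℚ) * d^2 := by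
      field_simp
    rw [e]; linarith
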